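/- Partial identification: under the marginal sensitivity model with true propensity π(x,y) satisfying Λ⁻¹ ≤ OR(π(x),π(x,y)) ≤ Λ, there exists h with ‖h‖_∞ ≤ log Λ such that μ₁ = μ₁^{(h)}, and consequently inf_{‖h‖_∞ ≤ log Λ} μ₁^{(h)} ≤ μ₁ ≤ sup_{‖h‖_∞ ≤ log Λ} μ₁^{(h)}. -/
import Mathlib

open MeasureTheory

noncomputable def OR (p1 p2 : ℝ) : ℝ := (p1 / (1 - p1)) / (p2 / (1 - p2))

theorem partial_identification
    {X Ω : Type*} [MeasurableSpace Ω] (μ : Measure Ω) [IsProbabilityMeasure μ]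
    (Xf : Ω → X) (Yf : Ω → ℝ) (Zf : Ω → ℝ)
    (π : X → ℝ) (hπ : ∀ x, π x ∈ Set.Ioo (0:ℝ) 1)
    (πxy : X → ℝ → ℝ) (hπxy : ∀ x y, πxy x y ∈ Set.Ioo (0:ℝ) 1)
    (Λ : ℝ) (hΛ : 1 ≤ Λ)
    (hsens : ∀ x y, Λ⁻¹ ≤ OR (π x) (πxy x y) ∧ OR (π x) (πxy x y) ≤ Λ)
    -- the shifted estimand μ₁^{(h)}
    (μ1h : (X → ℝ → ℝ) → ℝ)
    (hμ1h : ∀ h : X → ℝ → ℝ,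
      μ1h h = (∫ ω, Zf ω * (1 + (1 / π (Xf ω) - 1) * Real.exp (h (Xf ω) (Yf ω))) ∂μ)⁻¹ *
        ∫ ω, Zf ω * Yf ω * (1 + (1 / π (Xf ω) - 1) * Real.exp (h (Xf ω) (Yf ω))) ∂μ)
    (μ1 : ℝ)
    -- the self-normalized IPW identity for the true propensity score
    (hipw : μ1 = (∫ ω, Zf ω / πxy (Xf ω) (Yf ω) ∂μ)⁻¹ * ∫ ω, Zf ω * Yf ω / πxy (Xf ω) (Yf ω) ∂μ)
    (hbb : BddBelow {m : ℝ | ∃ h : X → ℝ → ℝ, (∀ x y, |h x y| ≤ Real.log Λ) ∧ μ1h h = m})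
    (hba : BddAbove {m : ℝ | ∃ h : X → ℝ → ℝ, (∀ x y, |h x y| ≤ Real.log Λ) ∧ μ1h h = m}) :
    (∃ h : X → ℝ → ℝ, (∀ x y, |h x y| ≤ Real.log Λ) ∧ μ1h h = μ1) ∧
    sInf {m : ℝ | ∃ h : X → ℝ → ℝ, (∀ x y, |h x y| ≤ Real.log Λ) ∧ μ1h h = m} ≤ μ1 ∧
    μ1 ≤ sSup {m : ℝ | ∃ h : X → ℝ → ℝ, (∀ x y, |h x y| ≤ Real.log Λ) ∧ μ1h h = m} := by

  have hΛ0 : (0:ℝ) < Λ := lt_of_lt_of_le one_pos hΛ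
  set h : X → ℝ → ℝ := fun x y => Real.log (OR (π x) (πxy x y)) with hh
  have hORpos : ∀ x y, 0 < OR (π x) (πxy x y) := by
    intro x y
    have h1 := hπ x
    have h2 := hπxy x y
    have : 0 < π x / (1 - π x) := div_pos h1.1 (by linarith [h1.2])
    have : 0 < πxy x y / (1 - πxy x y) := div_pos h2.1 (by linarith [h2.2])
    exact div_pos ‹0 < π x / (1 - π x)› this
  have hbound : ∀ x y, |h x y| ≤ Real.log Λ := by
    intro x y
    rw [abs_le]
    obtain ⟨hlo, hhi⟩ := hsens x y
    constructor
    · rw [← Real.log_inv]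
      exact Real.log_le_log (by positivity) hlo
    · exact Real.log_le_log (hORpos x y) hhi
  have hkey : ∀ x y, 1 + (1 / π x - 1) * Real.exp (h x y) = 1 / πxy x y := by
    intro x y
    have h1 := hπ x
    have h2 := hπxy x y
    rw [hh, Real.exp_log (hORpos x y), OR]
    have hp0 : π x ≠ 0 := ne_of_gt h1.1
    have hp1 : 1 - π x ≠ 0 := by linarith [h1.2]
    have hq0 : πxy x y ≠ 0 := ne_of_gt h2.1
    have hq1 : 1 - πxy x y ≠ 0 := by linarith [h2.2]
    field_simp
    ring
  have hmem : μ1h h = μ1 := by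
    rw [hμ1h h, hipw]
    congr 1
    · congr 1
      apply integral_congr_ae
      filter_upwards with ω
      rw [hkey, mul_one_div]
    · apply integral_congr_ae
      filter_upwards with ω
      rw [hkey, mul_one_div]
  refine ⟨⟨h, hbound, hmem⟩, ?_, ?_⟩
  · exact csInf_le hbb ⟨h, hbound, hmem⟩
  · exact le_csSup hba ⟨h, hbound, hmem⟩
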